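/- Let k ≥ 2 and let G_k be the whiskered cycle graph on vertices {x_i, y_i : i ∈ [2k]}. In the polynomial ring K[x_1, …, x_{2k}, y_1, …, y_{2k}], the ideal ⟨X_C X_σ : C a minimal vertex cover of G_k, σ ⊆ {x_1, …, x_{2k}}, σ ∩ C = ∅, |σ| = k⟩ (which is the k-th homological shift ideal HS_k(J(G_k)) of the vertex cover ideal of G_k) equals (∏_{i=1}^{2k} x_i) · ⟨y_1 y_3 ⋯ y_{2k−1}, y_2 y_4 ⋯ y_{2k}⟩. -/

import Mathlib

open scoped Classical

namespace PaperHS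

/-- A set of vertices is a vertex cover of a simple graph if it meets every edge. -/
def IsVertexCover {U : Type*} (H : SimpleGraph U) (C : Set U) : Prop :=
  ∀ ⦃a b : U⦄, H.Adj a b → a ∈ C ∨ b ∈ C

/-- A vertex cover is minimal if no proper subset is a vertex cover. -/
def IsMinVertexCover {U : Type*} (H : SimpleGraph U) (C : Set U) : Prop :=
  IsVertexCover H C ∧ ∀ D : Set U, D ⊂ C → ¬ IsVertexCover H D

/-- The whiskered cycle `G_k = W(C_{2k})`: the vertex `x_{i+1}` of the cycle is
encoded as `Sum.inl i` and the whisker vertex `y_{i+1}` as `Sum.inr i`. -/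
def whiskCycle (k : ℕ) : SimpleGraph (Fin (2 * k) ⊕ Fin (2 * k)) :=
  SimpleGraph.fromRel (fun x y =>
    match x, y with
    | Sum.inl i, Sum.inl j => (j : ℕ) = ((i : ℕ) + 1) % (2 * k)
    | Sum.inl i, Sum.inr j => i = j
    | _, _ => False)

open Finset

variable {k : ℕ}

/-- successor modulo `2*k` -/
def fs (i : Fin (2*k)) : Fin (2*k) :=
  ⟨((i:ℕ)+1) % (2*k), Nat.mod_lt _ (Nat.lt_of_le_of_lt (Nat.zero_le _) i.isLt)⟩

lemma fs_val (i : Fin (2*k)) :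
    (fs i : ℕ) = if (i:ℕ)+1 = 2*k then 0 else (i:ℕ)+1 := by
  have h := i.isLt
  by_cases h1 : (i:ℕ)+1 = 2*k
  · simp [fs, h1]
  · have : (i:ℕ)+1 < 2*k := by omega
    simp [fs, Nat.mod_eq_of_lt this, h1]

lemma fs_inj : Function.Injective (fs (k := k)) := by
  intro i j h
  have hi := i.isLt; have hj := j.isLt
  have h' : (fs i : ℕ) = (fs j : ℕ) := by rw [h]
  rw [fs_val, fs_val] at h'
  apply Fin.ext
  split_ifs at h' <;> omega

lemma fs_ne (i : Fin (2*k)) : fs i ≠ i := by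
  intro h
  have h' : (fs i : ℕ) = (i:ℕ) := by rw [h]
  rw [fs_val] at h'
  have := i.isLt
  split_ifs at h' <;> omega

lemma parity_fs (hk : 2 ≤ k) (i : Fin (2*k)) : Even ((fs i : ℕ)) ↔ ¬ Even (i:ℕ) := by
  rw [fs_val]
  have := i.isLt
  split_ifs with h
  · have : (i:ℕ) = 2*k-1 := by omega
    simp [this, Nat.even_iff]
    omega
  · rw [Nat.even_add_one]

lemma adj_inl_inr (i : Fin (2*k)) : (whiskCycle k).Adj (Sum.inl i) (Sum.inr i) := by
  simp [whiskCycle, SimpleGraph.fromRel_adj]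

lemma adj_inl_fs (i : Fin (2*k)) : (whiskCycle k).Adj (Sum.inl i) (Sum.inl (fs i)) := by
  refine (SimpleGraph.fromRel_adj _ _ _).2 ⟨?_, Or.inl ?_⟩
  · simpa using (fs_ne i).symm
  · show ((fs i : ℕ)) = ((i:ℕ)+1) % (2*k)
    rfl

lemma adj_cases {a b : Fin (2*k) ⊕ Fin (2*k)} (h : (whiskCycle k).Adj a b) :
    (∃ i, a = Sum.inl i ∧ b = Sum.inr i) ∨ (∃ i, a = Sum.inr i ∧ b = Sum.inl i) ∨
    (∃ i, a = Sum.inl i ∧ b = Sum.inl (fs i)) ∨ (∃ i, a = Sum.inl (fs i) ∧ b = Sum.inl i) := by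
  rw [whiskCycle, SimpleGraph.fromRel_adj] at h
  obtain ⟨hne, h | h⟩ := h
  · rcases a with i | i <;> rcases b with j | j
    · refine Or.inr (Or.inr (Or.inl ⟨i, rfl, ?_⟩))
      have : (j:ℕ) = ((i:ℕ)+1) % (2*k) := h
      rw [show Sum.inl j = Sum.inl (α := Fin (2*k)) (fs i) from ?_]
      congr 1
      exact Fin.ext this
    · have : i = j := h
      exact Or.inl ⟨i, rfl, by rw [this]⟩
    · exact absurd h (by simp)
    · exact absurd h (by simp)
  · rcases a with i | i <;> rcases b with j | j
    · refine Or.inr (Or.inr (Or.inr ⟨j, ?_, rfl⟩))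
      have : (i:ℕ) = ((j:ℕ)+1) % (2*k) := h
      congr 1
      exact Fin.ext this
    · exact absurd h (by simp)
    · have : j = i := h
      exact Or.inr (Or.inl ⟨j, by rw [this], rfl⟩)
    · exact absurd h (by simp)


noncomputable def CC (k : ℕ) (p : Fin (2*k) → Prop) : Finset (Fin (2*k) ⊕ Fin (2*k)) :=
  (univ.filter p).image Sum.inl ∪ (univ.filter (fun i => ¬ p i)).image Sum.inr

noncomputable def SS (k : ℕ) (p : Fin (2*k) → Prop) : Finset (Fin (2*k) ⊕ Fin (2*k)) :=
  (univ.filter (fun i => ¬ p i)).image Sum.inl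

lemma mem_CC_inl {p : Fin (2*k) → Prop} {i : Fin (2*k)} :
    Sum.inl i ∈ CC k p ↔ p i := by
  simp [CC, Sum.inl.injEq]

lemma mem_CC_inr {p : Fin (2*k) → Prop} {i : Fin (2*k)} :
    Sum.inr i ∈ CC k p ↔ ¬ p i := by
  simp [CC, Sum.inr.injEq]

lemma CC_cover (p : Fin (2*k) → Prop) (hp : ∀ i, p (fs i) ↔ ¬ p i) :
    IsVertexCover (whiskCycle k) ↑(CC k p) := by
  intro a b hab
  rcases adj_cases hab with ⟨i, rfl, rfl⟩ | ⟨i, rfl, rfl⟩ | ⟨i, rfl, rfl⟩ | ⟨i, rfl, rfl⟩ <;>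
    simp only [Finset.mem_coe, mem_CC_inl, mem_CC_inr] <;>
    (have h' := hp i; tauto)

lemma CC_min (p : Fin (2*k) → Prop) (hp : ∀ i, p (fs i) ↔ ¬ p i) :
    IsMinVertexCover (whiskCycle k) ↑(CC k p) := by
  refine ⟨CC_cover p hp, ?_⟩
  intro D hD hDcov
  obtain ⟨c, hcC, hcD⟩ := Set.exists_of_ssubset hD
  have hDC : D ⊆ ↑(CC k p) := hD.subset
  have hcC' : c ∈ CC k p := hcC
  rcases c with i | i
  · have hpi : p i := mem_CC_inl.1 hcC'
    rcases hDcov (adj_inl_inr i) with h | h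
    · exact hcD h
    · exact (mem_CC_inr.1 (hDC h)) hpi
  · have hpi : ¬ p i := mem_CC_inr.1 hcC'
    rcases hDcov (adj_inl_inr i) with h | h
    · exact hpi (mem_CC_inl.1 (hDC h))
    · exact hcD h

lemma prod_CC_SS {K : Type*} [Field K] (p : Fin (2*k) → Prop) :
    (∏ x ∈ CC k p, (MvPolynomial.X x : MvPolynomial (Fin (2*k) ⊕ Fin (2*k)) K)) *
      ∏ x ∈ SS k p, MvPolynomial.X x
    = (∏ i : Fin (2*k), MvPolynomial.X (Sum.inl i)) *
        ∏ i ∈ univ.filter (fun i => ¬ p i), MvPolynomial.X (Sum.inr i) := by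
  have hdis : Disjoint ((univ.filter p).image (Sum.inl : Fin (2*k) → Fin (2*k) ⊕ Fin (2*k)))
      ((univ.filter (fun i => ¬ p i)).image Sum.inr) := by
    simp [Finset.disjoint_left]
  rw [CC, Finset.prod_union hdis, SS,
    Finset.prod_image (fun a _ b _ h => Sum.inl_injective h),
    Finset.prod_image (fun a _ b _ h => Sum.inr_injective h),
    Finset.prod_image (fun a _ b _ h => Sum.inl_injective h),
    mul_right_comm, Finset.prod_filter_mul_prod_filter_not]


lemma not_both (hk : 2 ≤ k) (B : Finset (Fin (2*k))) (hcov : ∀ i, i ∈ B ∨ fs i ∈ B)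
    (hcard : B.card = k) : ∀ i, ¬ (i ∈ B ∧ fs i ∈ B) := by
  have hrange : (Finset.range k).card = k := Finset.card_range k
  -- first injection: i ↦ i.val / 2
  have inj1 := Finset.inj_on_of_surj_on_of_card_le (s := B) (t := Finset.range k)
    (fun i _ => (i : ℕ) / 2)
    (fun i _ => by
      have := i.isLt
      simp only [Finset.mem_range]
      omega)
    (fun j hj => by
      simp only [Finset.mem_range] at hj
      have h2j : 2*j < 2*k := by omega
      rcases hcov ⟨2*j, h2j⟩ with h | h
      · exact ⟨⟨2*j, h2j⟩, h, by show 2*j/2 = j; omega⟩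
      · refine ⟨fs ⟨2*j, h2j⟩, h, ?_⟩
        show ((fs ⟨2*j, h2j⟩ : ℕ)) / 2 = j
        have := fs_val (⟨2*j, h2j⟩ : Fin (2*k))
        simp only [Fin.val_mk] at this
        rw [this]
        split_ifs with h' <;> omega)
    (by omega)
  -- second injection: i ↦ (fs i).val / 2
  have inj2 := Finset.inj_on_of_surj_on_of_card_le (s := B) (t := Finset.range k)
    (fun i _ => ((fs i : ℕ)) / 2)
    (fun i _ => by
      have := (fs i).isLt
      simp only [Finset.mem_range]
      omega)
    (fun j hj => by
      simp only [Finset.mem_range] at hj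
      have hvlt : (if j = 0 then 2*k-1 else 2*j-1) < 2*k := by split_ifs <;> omega
      set i1 : Fin (2*k) := ⟨if j = 0 then 2*k-1 else 2*j-1, hvlt⟩ with hi1
      have hfs1 : ((fs i1 : ℕ)) = 2*j := by
        rw [fs_val]
        simp only [hi1]
        split_ifs <;> omega
      rcases hcov i1 with h | h
      · exact ⟨i1, h, by show ((fs i1 : ℕ))/2 = j; rw [hfs1]; omega⟩
      · refine ⟨fs i1, h, ?_⟩
        show ((fs (fs i1) : ℕ)) / 2 = j
        have : ((fs (fs i1) : ℕ)) = if 2*j+1 = 2*k then 0 else 2*j+1 := by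
          rw [fs_val, hfs1]
        rw [this]
        have : 2*j+1 ≠ 2*k := by omega
        split_ifs <;> omega)
    (by omega)
  intro i ⟨hi, hfi⟩
  by_cases hev : Even (i : ℕ)
  · have : (i : ℕ) / 2 = ((fs i : ℕ)) / 2 := by
      have h1 := fs_val i
      have h2 := i.isLt
      rw [Nat.even_iff] at hev
      split_ifs at h1 <;> omega
    exact fs_ne i (inj1 hfi hi this.symm)
  · have : ((fs i : ℕ)) / 2 = ((fs (fs i) : ℕ)) / 2 := by
      have h1 := fs_val i
      have h2 := fs_val (fs i)
      have h3 := i.isLt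
      have h4 := (fs i).isLt
      rw [Nat.even_iff] at hev
      split_ifs at h1 <;> split_ifs at h2 <;> omega
    exact fs_ne i (inj2 hfi hi this.symm)

lemma halving (hk : 2 ≤ k) (B : Finset (Fin (2*k))) (hcov : ∀ i, i ∈ B ∨ fs i ∈ B)
    (hcard : B.card = k) : ∀ i, i ∈ B ↔ fs i ∉ B := by
  intro i
  have h1 := hcov i
  have h2 := not_both hk B hcov hcard i
  tauto

lemma alternation (hk : 2 ≤ k) (B : Finset (Fin (2*k))) (hcov : ∀ i, i ∈ B ∨ fs i ∈ B)
    (hcard : B.card = k) :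
    (∀ i : Fin (2*k), i ∈ B ↔ Even (i:ℕ)) ∨ (∀ i : Fin (2*k), i ∈ B ↔ ¬ Even (i:ℕ)) := by
  have key := halving hk B hcov hcard
  have h0lt : 0 < 2*k := by omega
  have main : ∀ m (hm : m < 2*k), ((⟨m, hm⟩ : Fin (2*k)) ∈ B ↔ (Even m ↔ (⟨0, h0lt⟩ : Fin (2*k)) ∈ B)) := by
    intro m
    induction m with
    | zero => intro hm; simp
    | succ m ih =>
      intro hm
      have hm' : m < 2*k := by omega
      have hfs : fs (⟨m, hm'⟩ : Fin (2*k)) = ⟨m+1, hm⟩ := by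
        apply Fin.ext
        rw [fs_val]
        simp only
        split_ifs <;> omega
      have h1 := key ⟨m, hm'⟩
      rw [hfs] at h1
      have h2 := ih hm'
      rw [Nat.even_add_one]
      tauto
  by_cases h0 : (⟨0, h0lt⟩ : Fin (2*k)) ∈ B
  · left
    intro i
    have := main i.1 i.isLt
    simp only [Fin.eta] at this
    tauto
  · right
    intro i
    have := main i.1 i.isLt
    simp only [Fin.eta] at this
    tauto


lemma adj_inr_eq {a : Fin (2*k) ⊕ Fin (2*k)} {i : Fin (2*k)}
    (h : (whiskCycle k).Adj a (Sum.inr i)) : a = Sum.inl i := by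
  rcases adj_cases h with ⟨j, ha, hb⟩ | ⟨j, ha, hb⟩ | ⟨j, ha, hb⟩ | ⟨j, ha, hb⟩
  · obtain rfl : j = i := (Sum.inr.inj hb).symm
    exact ha
  · exact absurd hb (by simp)
  · exact absurd hb (by simp)
  · exact absurd hb (by simp)

lemma card_even (hk : 2 ≤ k) :
    (univ.filter (fun i : Fin (2*k) => Even (i:ℕ))).card = k ∧
    (univ.filter (fun i : Fin (2*k) => ¬ Even (i:ℕ))).card = k := by
  set E := univ.filter (fun i : Fin (2*k) => Even (i:ℕ)) with hE
  set O := univ.filter (fun i : Fin (2*k) => ¬ Even (i:ℕ)) with hO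
  have hsum : E.card + O.card = 2*k := by
    rw [hE, hO, Finset.card_filter_add_card_filter_not]
    simp
  have himg : ∀ (S T : Finset (Fin (2*k))), (∀ i ∈ S, fs i ∈ T) → S.card ≤ T.card := by
    intro S T hST
    calc S.card = (S.image fs).card := (Finset.card_image_of_injective S fs_inj).symm
      _ ≤ T.card := Finset.card_le_card (by
          intro j hj
          obtain ⟨i, hi, rfl⟩ := Finset.mem_image.1 hj
          exact hST i hi)
  have h1 : E.card ≤ O.card := by
    refine himg E O ?_
    intro i hi
    rw [hE, Finset.mem_filter] at hi
    rw [hO, Finset.mem_filter]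
    refine ⟨Finset.mem_univ _, ?_⟩
    rw [parity_fs hk]
    exact fun h => h hi.2
  have h2 : O.card ≤ E.card := by
    refine himg O E ?_
    intro i hi
    rw [hO, Finset.mem_filter] at hi
    rw [hE, Finset.mem_filter]
    exact ⟨Finset.mem_univ _, (parity_fs hk i).2 hi.2⟩
  omega

lemma forward (hk : 2 ≤ k) {C σ : Finset (Fin (2*k) ⊕ Fin (2*k))}
    (hC : IsMinVertexCover (whiskCycle k) ↑C)
    (hσ1 : ∀ z ∈ σ, ∃ i : Fin (2*k), z = Sum.inl i) (hσ2 : ∀ z ∈ σ, z ∉ C)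
    (hσ3 : σ.card = k) :
    (C = CC k (fun i => Even (i:ℕ)) ∧ σ = SS k (fun i => Even (i:ℕ))) ∨
    (C = CC k (fun i => ¬ Even (i:ℕ)) ∧ σ = SS k (fun i => ¬ Even (i:ℕ))) := by
  have hcov := hC.1
  have F1 : ∀ i : Fin (2*k), Sum.inl i ∈ C ∨ Sum.inr i ∈ C := fun i => by
    simpa using hcov (adj_inl_inr i)
  have F2 : ∀ i : Fin (2*k), Sum.inr i ∈ C → Sum.inl i ∉ C := by
    intro i hri hli
    refine hC.2 (↑C \ {Sum.inr i}) ?_ ?_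
    · constructor
      · exact Set.diff_subset
      · intro hsub
        exact (hsub hri).2 rfl
    · intro a b hab
      rcases hcov hab with h | h
      · by_cases ha : a = Sum.inr i
        · subst ha
          have hb : b = Sum.inl i := adj_inr_eq hab.symm
          subst hb
          exact Or.inr ⟨hli, by simp⟩
        · exact Or.inl ⟨h, ha⟩
      · by_cases hb : b = Sum.inr i
        · subst hb
          have ha : a = Sum.inl i := adj_inr_eq hab
          subst ha
          exact Or.inl ⟨hli, by simp⟩
        · exact Or.inr ⟨h, hb⟩
  have F3 : ∀ i : Fin (2*k), Sum.inl i ∈ C ∨ Sum.inl (fs i) ∈ C := fun i => by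
    simpa using hcov (adj_inl_fs i)
  set A : Finset (Fin (2*k)) := univ.filter (fun i => Sum.inl i ∈ C) with hA
  set Acomp : Finset (Fin (2*k)) := univ.filter (fun i => ¬ Sum.inl i ∈ C) with hAc
  have hσT : σ ⊆ Acomp.image (Sum.inl : Fin (2*k) → Fin (2*k) ⊕ Fin (2*k)) := by
    intro z hz
    obtain ⟨i, rfl⟩ := hσ1 z hz
    refine Finset.mem_image.2 ⟨i, ?_, rfl⟩
    rw [hAc, Finset.mem_filter]
    exact ⟨Finset.mem_univ _, hσ2 _ hz⟩
  have hTcard : (Acomp.image (Sum.inl : Fin (2*k) → Fin (2*k) ⊕ Fin (2*k))).card = Acomp.card :=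
    Finset.card_image_of_injective _ Sum.inl_injective
  have hAcomp_le : Acomp.card ≤ k := by
    have h : Acomp.card ≤ (Finset.range k).card := by
      refine Finset.card_le_card_of_injOn (fun i => (i:ℕ)/2) ?_ ?_
      · intro i _
        have := i.isLt
        simp only [Finset.coe_range, Set.mem_Iio, Finset.mem_range]
        omega
      · intro i hi j hj hij
        have hij' : (i:ℕ)/2 = (j:ℕ)/2 := hij
        rw [Finset.mem_coe, hAc, Finset.mem_filter] at hi hj
        by_contra hne
        have hvne : (i:ℕ) ≠ (j:ℕ) := fun h => hne (Fin.ext h)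
        have hcases : (j:ℕ) = (i:ℕ)+1 ∨ (i:ℕ) = (j:ℕ)+1 := by omega
        rcases hcases with h | h
        · have hfsij : fs i = j := by
            apply Fin.ext
            rw [fs_val]
            have := j.isLt
            split_ifs <;> omega
          rcases F3 i with hc | hc
          · exact hi.2 hc
          · rw [hfsij] at hc; exact hj.2 hc
        · have hfsij : fs j = i := by
            apply Fin.ext
            rw [fs_val]
            have := i.isLt
            split_ifs <;> omega
          rcases F3 j with hc | hc
          · exact hj.2 hc
          · rw [hfsij] at hc; exact hi.2 hc
    simpa using h
  have hσeq : σ = Acomp.image (Sum.inl : Fin (2*k) → Fin (2*k) ⊕ Fin (2*k)) := by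
    refine Finset.eq_of_subset_of_card_le hσT ?_
    rw [hTcard]
    omega
  have hAcomp : Acomp.card = k := by
    have h1 := Finset.card_le_card hσT
    rw [hTcard] at h1
    omega
  have hAcard : A.card = k := by
    have := Finset.card_filter_add_card_filter_not
      (s := (univ : Finset (Fin (2*k)))) (p := fun i => Sum.inl i ∈ C)
    rw [← hA, ← hAc] at this
    simp only [Finset.card_univ, Fintype.card_fin] at this
    omega
  have hcovA : ∀ i, i ∈ A ∨ fs i ∈ A := by
    intro i
    rw [hA, Finset.mem_filter, Finset.mem_filter]
    rcases F3 i with h | h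
    · exact Or.inl ⟨Finset.mem_univ _, h⟩
    · exact Or.inr ⟨Finset.mem_univ _, h⟩
  have halt := alternation hk A hcovA hAcard
  have hmemA : ∀ i : Fin (2*k), i ∈ A ↔ Sum.inl i ∈ C := by
    intro i; rw [hA, Finset.mem_filter]; simp
  rcases halt with halt | halt
  · left
    have hinl : ∀ i : Fin (2*k), Sum.inl i ∈ C ↔ Even (i:ℕ) := fun i => by
      rw [← hmemA, halt]
    have hinr : ∀ i : Fin (2*k), Sum.inr i ∈ C ↔ ¬ Even (i:ℕ) := by
      intro i
      constructor
      · intro h he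
        exact F2 i h ((hinl i).2 he)
      · intro he
        rcases F1 i with h | h
        · exact absurd ((hinl i).1 h) he
        · exact h
    constructor
    · ext a
      rcases a with i | i
      · rw [mem_CC_inl, hinl]
      · rw [mem_CC_inr, hinr]
    · rw [hσeq, SS]
      congr 1
      rw [hAc]
      ext i
      simp [hinl i]
  · right
    have hinl : ∀ i : Fin (2*k), Sum.inl i ∈ C ↔ ¬ Even (i:ℕ) := fun i => by
      rw [← hmemA, halt]
    have hinr : ∀ i : Fin (2*k), Sum.inr i ∈ C ↔ ¬ ¬ Even (i:ℕ) := by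
      intro i
      constructor
      · intro h he
        exact F2 i h ((hinl i).2 he)
      · intro he
        rcases F1 i with h | h
        · exact absurd ((hinl i).1 h) he
        · exact h
    constructor
    · ext a
      rcases a with i | i
      · rw [mem_CC_inl, hinl]
      · rw [mem_CC_inr, hinr]
    · rw [hσeq, SS]
      congr 1
      rw [hAc]
      ext i
      simp [hinl i]



theorem statement8 (k : ℕ) (hk : 2 ≤ k) (K : Type*) [Field K] :
    Ideal.span { m : MvPolynomial (Fin (2 * k) ⊕ Fin (2 * k)) K |
        ∃ C σ : Finset (Fin (2 * k) ⊕ Fin (2 * k)),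
          IsMinVertexCover (whiskCycle k) ↑C ∧
          (∀ z ∈ σ, ∃ i : Fin (2 * k), z = Sum.inl i) ∧
          (∀ z ∈ σ, z ∉ C) ∧ σ.card = k ∧
          m = (∏ x ∈ C, MvPolynomial.X x) * ∏ x ∈ σ, MvPolynomial.X x }
      = Ideal.span
          { (∏ i : Fin (2 * k), (MvPolynomial.X (Sum.inl i) :
                MvPolynomial (Fin (2 * k) ⊕ Fin (2 * k)) K)) *
              ∏ i ∈ Finset.univ.filter (fun i : Fin (2 * k) => Even (i : ℕ)),
                MvPolynomial.X (Sum.inr i),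
            (∏ i : Fin (2 * k), (MvPolynomial.X (Sum.inl i) :
                MvPolynomial (Fin (2 * k) ⊕ Fin (2 * k)) K)) *
              ∏ i ∈ Finset.univ.filter (fun i : Fin (2 * k) => ¬ Even (i : ℕ)),
                MvPolynomial.X (Sum.inr i) } := by

  have hp1 : ∀ i : Fin (2*k), (fun j : Fin (2*k) => ¬ Even (j:ℕ)) (fs i) ↔
      ¬ (fun j : Fin (2*k) => ¬ Even (j:ℕ)) i := fun i => not_congr (parity_fs hk i)
  have hp2 : ∀ i : Fin (2*k), (fun j : Fin (2*k) => Even (j:ℕ)) (fs i) ↔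
      ¬ (fun j : Fin (2*k) => Even (j:ℕ)) i := fun i => parity_fs hk i
  congr 1
  ext m
  constructor
  · rintro ⟨C, σ, hC, h1, h2, h3, rfl⟩
    rcases forward hk hC h1 h2 h3 with ⟨rfl, rfl⟩ | ⟨rfl, rfl⟩
    · refine Set.mem_insert_iff.2 (Or.inr (Set.mem_singleton_iff.2 ?_))
      rw [prod_CC_SS]
      exact congrArg _ (Finset.prod_congr (by ext i; simp) (fun _ _ => rfl))
    · refine Set.mem_insert_iff.2 (Or.inl ?_)
      rw [prod_CC_SS]
      exact congrArg _ (Finset.prod_congr (by ext i; simp) (fun _ _ => rfl))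
  · intro hm
    rcases hm with rfl | rfl
    · refine ⟨CC k (fun i => ¬ Even (i:ℕ)), SS k (fun i => ¬ Even (i:ℕ)),
        CC_min _ hp1, ?_, ?_, ?_, ?_⟩
      · intro z hz
        simp only [SS, Finset.mem_image] at hz
        obtain ⟨i, _, rfl⟩ := hz
        exact ⟨i, rfl⟩
      · intro z hz
        simp only [SS, Finset.mem_image, Finset.mem_filter] at hz
        obtain ⟨i, hi, rfl⟩ := hz
        rw [mem_CC_inl]
        exact hi.2
      · rw [SS, Finset.card_image_of_injective _ Sum.inl_injective]
        refine Eq.trans ?_ (card_even hk).1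
        exact congrArg Finset.card (by ext i; simp)
      · rw [prod_CC_SS]
        exact congrArg _ (Finset.prod_congr (by ext i; simp) (fun _ _ => rfl))
    · refine ⟨CC k (fun i => Even (i:ℕ)), SS k (fun i => Even (i:ℕ)),
        CC_min _ hp2, ?_, ?_, ?_, ?_⟩
      · intro z hz
        simp only [SS, Finset.mem_image] at hz
        obtain ⟨i, _, rfl⟩ := hz
        exact ⟨i, rfl⟩
      · intro z hz
        simp only [SS, Finset.mem_image, Finset.mem_filter] at hz
        obtain ⟨i, hi, rfl⟩ := hz
        rw [mem_CC_inl]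
        exact hi.2
      · rw [SS, Finset.card_image_of_injective _ Sum.inl_injective]
        refine Eq.trans ?_ (card_even hk).2
        exact congrArg Finset.card (by ext i; simp)
      · rw [prod_CC_SS]
        exact congrArg _ (Finset.prod_congr (by ext i; simp) (fun _ _ => rfl))


end PaperHS
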